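/- Let R be a Steiner tree for a vertex set Z with |Z| = 2k (k ≥ 1) in a graph H. Let V*₂(R) be the set of vertices of degree 2 in R adjacent in R to a vertex of V_{=1}(R) ∪ V_{≥3}(R), and V*(R) = V_{=1}(R) ∪ V_{≥3}(R) ∪ V*₂(R). For each v ∈ V*(R), fix an enumeration e¹, …, e^{r_v} of the edges of R incident to v, and let pairing_v be a non-crossing pairing at v: for v ∈ V_{≥3}(R) a set of unordered pairs of distinct edges of R incident to v; for v ∈ V*₂(R) a set of pairs of (possibly equal) edges of R incident to v; and for v ∈ V_{=1}(R) either the empty set or the singleton consisting of the pair formed by the unique incident edge taken twice — such that there do not exist two pairs (e^i,e^j), (e^x,e^y) ∈ pairing_v with i < j and x < y satisfying i < x < j < y or x < i < y < j. Then Σ_{v ∈ V*(R)} |pairing_v| ≤ 48k. -/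

import Mathlib

open SimpleGraph

/-- The degree of a vertex in a subgraph: the number of its neighbours in the subgraph. -/
noncomputable def degN {V : Type*} {H : SimpleGraph V} (R : H.Subgraph) (v : V) : ℕ :=
  (R.neighborSet v).ncard

/-- `R` is a Steiner tree for `Z` in `H`: a subtree of `H` whose set of leaves
(vertices of degree exactly `1`) is exactly `Z`. -/
def IsSteinerTree {V : Type*} (H : SimpleGraph V) (Z : Set V) (R : H.Subgraph) : Prop :=
  R.coe.IsTree ∧ {v : V | degN R v = 1} = Z

/-- `v` belongs to `V*(R) = V₌₁(R) ∪ V₊₃(R) ∪ V*₂(R)`, where `V*₂(R)` is the set of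
degree-2 vertices of `R` adjacent in `R` to a vertex of degree `1` or `≥ 3`. -/
def InVStar {V : Type*} {H : SimpleGraph V} (R : H.Subgraph) (v : V) : Prop :=
  degN R v = 1 ∨ 3 ≤ degN R v ∨
    (degN R v = 2 ∧ ∃ u : V, R.Adj v u ∧ (degN R u = 1 ∨ 3 ≤ degN R u))

lemma noncross_card_le {n : ℕ} (F : Finset (Sym2 (Fin n)))
    (hd : ∀ p ∈ F, ¬ p.IsDiag)
    (hnc : ¬ ∃ i j x y : Fin n, s(i, j) ∈ F ∧ s(x, y) ∈ F ∧ i < j ∧ x < y ∧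
      ((i < x ∧ x < j ∧ j < y) ∨ (x < i ∧ i < y ∧ y < j))) :
    F.card ≤ 2 * n := by
  classical
  have hmk : ∀ p : Sym2 (Fin n), s(p.inf, p.sup) = p := fun p =>
    Sym2.sortEquiv.symm_apply_apply p
  have hlt : ∀ p ∈ F, p.inf < p.sup := by
    intro p hp
    induction p using Sym2.ind with
    | _ a b =>
      have : a ≠ b := by simpa using hd _ hp
      simpa using inf_lt_sup.mpr this
  set P : Sym2 (Fin n) → Prop := fun p => ∀ q ∈ F, q.inf = p.inf → q.sup ≤ p.sup with hP
  have h1 : (F.filter (fun p => P p)).card ≤ n := by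
    have := Finset.card_le_card_of_injOn (f := Sym2.inf)
      (s := F.filter (fun p => P p)) (t := Finset.univ) (fun _ _ => Finset.mem_univ _) ?_
    · simpa using this
    · intro p hp q hq hpq
      simp only [Finset.mem_coe, Finset.mem_filter] at hp hq
      have h1 := hp.2 q hq.1 hpq.symm
      have h2 := hq.2 p hp.1 hpq
      have hsup : p.sup = q.sup := le_antisymm h2 h1
      rw [← hmk p, ← hmk q, hpq, hsup]
  have h2 : (F.filter (fun p => ¬ P p)).card ≤ n := by
    have key : ∀ p ∈ F, ∀ q ∈ F, ¬ P q → p.sup = q.sup → p.inf < q.inf → False := by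
      intro p hp q hq hnq hsup hlt'
      simp only [hP] at hnq
      push_neg at hnq
      obtain ⟨d, hdF, hdinf, hdsup⟩ := hnq
      have hqd : q.sup < d.sup := hdsup
      refine hnc ⟨p.inf, p.sup, d.inf, d.sup, ?_, ?_, hlt p hp, hlt d hdF, ?_⟩
      · rw [hmk]; exact hp
      · rw [hmk]; exact hdF
      · left
        refine ⟨by rw [hdinf]; exact hlt', by rw [hdinf, hsup]; exact hlt q hq, by rw [hsup]; exact hqd⟩
    have := Finset.card_le_card_of_injOn (f := Sym2.sup)
      (s := F.filter (fun p => ¬ P p)) (t := Finset.univ) (fun _ _ => Finset.mem_univ _) ?_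
    · simpa using this
    · intro p hp q hq hpq
      simp only [Finset.mem_coe, Finset.mem_filter] at hp hq
      rcases lt_trichotomy p.inf q.inf with h | h | h
      · exact absurd (key p hp.1 q hq.1 hq.2 hpq h) (fun x => x)
      · rw [← hmk p, ← hmk q, h, hpq]
      · exact absurd (key q hq.1 p hp.1 hp.2 hpq.symm h) (fun x => x)
  calc F.card = (F.filter (fun p => P p)).card + (F.filter (fun p => ¬ P p)).card :=
        (Finset.card_filter_add_card_filter_not _).symm
    _ ≤ n + n := Nat.add_le_add h1 h2
    _ = 2 * n := (two_mul n).symm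


lemma pairing_card_le_choose {n : ℕ} (F : Finset (Sym2 (Fin n))) :
    F.card ≤ Nat.choose (n + 1) 2 := by
  classical
  calc F.card ≤ Fintype.card (Sym2 (Fin n)) := Finset.card_le_univ _
    _ = Nat.choose (n + 1) 2 := by rw [Sym2.card, Fintype.card_fin]

/-- A family of pairings at the vertices of `V*(R)` of a Steiner tree for a set of `2k`
vertices: at each `v ∈ V*(R)` the edges of `R` incident to `v` are enumerated as
`e¹, …, e^{r_v}` (via `enum`), `pairing v` is a set of unordered pairs of indices of
incident edges (with pairs of distinct edges at vertices of degree `≥ 3`) that is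
non-crossing.  Then the total number of pairs is at most `48k`. -/
theorem stmt12 {V : Type*} [Fintype V] (H : SimpleGraph V) (Z : Set V)
    (k : ℕ) (hk : 1 ≤ k) (hZ : Z.ncard = 2 * k)
    (R : H.Subgraph) (hR : IsSteinerTree H Z R)
    [DecidablePred (InVStar R)]
    (enum : ∀ v : V, Fin (degN R v) ≃ {e : Sym2 V // e ∈ R.edgeSet ∧ v ∈ e})
    (pairing : ∀ v : V, Finset (Sym2 (Fin (degN R v))))
    (hnc : ∀ v : V, InVStar R v → ¬ ∃ i j x y : Fin (degN R v),
      s(i, j) ∈ pairing v ∧ s(x, y) ∈ pairing v ∧ i < j ∧ x < y ∧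
      ((i < x ∧ x < j ∧ j < y) ∨ (x < i ∧ i < y ∧ y < j)))
    (hbranch : ∀ v : V, 3 ≤ degN R v → ∀ p ∈ pairing v, ¬ p.IsDiag) :
    ∑ v ∈ Finset.univ.filter (fun v : V => InVStar R v), (pairing v).card ≤ 48 * k := by
  classical
  obtain ⟨htree, hleafZ⟩ := hR
  haveI : Fintype R.verts := Fintype.ofFinite _
  haveI : DecidableRel R.coe.Adj := Classical.decRel _
  haveI : DecidableEq R.verts := Classical.decEq _
  have hdeq : ∀ v : V, degN R v = (R.neighborSet v).toFinset.card := fun v =>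
    Set.ncard_eq_toFinset_card' _
  have hvert : ∀ v : V, 1 ≤ degN R v → v ∈ R.verts := by
    intro v hv
    have hpos : 0 < (R.neighborSet v).ncard := hv
    obtain ⟨u, hu⟩ := (Set.ncard_pos (Set.toFinite _)).mp hpos
    exact (hu : R.Adj v u).fst_mem
  have hcoedeg : ∀ v : R.verts, R.coe.degree v = degN R v.1 := by
    intro v
    rw [← SimpleGraph.card_neighborSet_eq_degree, ← Nat.card_eq_fintype_card,
      Nat.card_congr (SimpleGraph.Subgraph.coeNeighborSetEquiv v), Nat.card_coe_set_eq]
    rfl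
  have hsum : ∑ v ∈ R.verts.toFinset, degN R v + 2 = 2 * R.verts.toFinset.card := by
    have e3 := SimpleGraph.sum_degrees_eq_twice_card_edges R.coe
    have e13 : ∑ v ∈ R.verts.toFinset, degN R v = 2 * R.coe.edgeFinset.card := by
      rw [← e3, Finset.sum_subtype R.verts.toFinset (fun x => Set.mem_toFinset) (degN R)]
      refine Finset.sum_congr rfl (fun v _ => ?_)
      rw [← hcoedeg v]
      congr!
    have e4 := htree.card_edgeFinset
    have e5 : R.verts.toFinset.card = Fintype.card R.verts := Set.toFinset_card _
    omega
  have hZ2 : 1 < Z.ncard := by omega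
  have hmin : ∀ v ∈ R.verts.toFinset, 1 ≤ degN R v := by
    intro v hv
    rw [Set.mem_toFinset] at hv
    obtain ⟨z1, z2, hz1, hz2, hz12⟩ := (Set.one_lt_ncard_iff (Set.toFinite _)).mp hZ2
    have hdz : ∀ z ∈ Z, degN R z = 1 := fun z hz => by
      rw [← hleafZ] at hz; exact hz
    obtain ⟨z, hzZ, hzv⟩ : ∃ z ∈ Z, z ≠ v := by
      by_cases h : z1 = v
      · exact ⟨z2, hz2, by rintro rfl; exact hz12 h⟩
      · exact ⟨z1, hz1, h⟩
    have hzvert : z ∈ R.verts := hvert z (by rw [hdz z hzZ])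
    obtain ⟨w⟩ := htree.isConnected.preconnected ⟨v, hv⟩ ⟨z, hzvert⟩
    cases w with
    | nil => exact absurd rfl hzv
    | @cons _ b _ h p =>
      have hadj : R.Adj v b.1 := h
      have hne : (R.neighborSet v).Nonempty := ⟨b.1, hadj⟩
      exact (Set.ncard_pos (Set.toFinite _)).mpr hne
  set L : Finset V := R.verts.toFinset.filter (fun v => degN R v = 1) with hL
  set D2 : Finset V := R.verts.toFinset.filter (fun v => degN R v = 2) with hD2
  set B : Finset V := R.verts.toFinset.filter (fun v => 3 ≤ degN R v) with hB
  have hmemL : ∀ v : V, v ∈ L ↔ degN R v = 1 := by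
    intro v
    simp only [hL, Finset.mem_filter, Set.mem_toFinset]
    exact ⟨fun h => h.2, fun h => ⟨hvert v (by omega), h⟩⟩
  have hmemB : ∀ v : V, v ∈ B ↔ 3 ≤ degN R v := by
    intro v
    simp only [hB, Finset.mem_filter, Set.mem_toFinset]
    exact ⟨fun h => h.2, fun h => ⟨hvert v (by omega), h⟩⟩
  have hLcard : L.card = 2 * k := by
    have hLZ : L = Z.toFinset := by
      ext v
      rw [hmemL, Set.mem_toFinset, ← hleafZ]
      rfl
    rw [hLZ, ← Set.ncard_eq_toFinset_card', hZ]
  have hsplit : ∀ f : V → ℕ,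
      ∑ v ∈ R.verts.toFinset, f v = ∑ v ∈ L, f v + ∑ v ∈ D2, f v + ∑ v ∈ B, f v := by
    intro f
    have e1 := Finset.sum_filter_add_sum_filter_not R.verts.toFinset
      (fun v => degN R v = 1) f
    have e2 := Finset.sum_filter_add_sum_filter_not
      (R.verts.toFinset.filter (fun v => ¬ degN R v = 1)) (fun v => degN R v = 2) f
    have eD : (R.verts.toFinset.filter (fun v => ¬ degN R v = 1)).filter
        (fun v => degN R v = 2) = D2 := by
      rw [Finset.filter_filter]
      ext v
      simp only [hD2, Finset.mem_filter]
      constructor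
      · rintro ⟨h1, _, h3⟩; exact ⟨h1, h3⟩
      · rintro ⟨h1, h3⟩; exact ⟨h1, by omega, h3⟩
    have eB : (R.verts.toFinset.filter (fun v => ¬ degN R v = 1)).filter
        (fun v => ¬ degN R v = 2) = B := by
      rw [Finset.filter_filter]
      ext v
      simp only [hB, Finset.mem_filter]
      constructor
      · rintro ⟨h1, h2, h3⟩; exact ⟨h1, by have := hmin v h1; omega⟩
      · rintro ⟨h1, h3⟩; exact ⟨h1, by omega, by omega⟩
    rw [eD, eB] at e2
    rw [← hL] at e1
    omega
  have hcard : R.verts.toFinset.card = L.card + D2.card + B.card := by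
    have := hsplit (fun _ => 1)
    simpa using this
  have hdegsum : ∑ v ∈ R.verts.toFinset, degN R v
      = L.card + 2 * D2.card + ∑ v ∈ B, degN R v := by
    have e := hsplit (degN R)
    have eL : ∑ v ∈ L, degN R v = L.card := by
      rw [Finset.card_eq_sum_ones]
      exact Finset.sum_congr rfl (fun v hv => (hmemL v).mp hv)
    have eD : ∑ v ∈ D2, degN R v = 2 * D2.card := by
      rw [Finset.sum_congr rfl (fun v hv => (Finset.mem_filter.mp hv).2),
        Finset.sum_const, smul_eq_mul, mul_comm]
    omega
  have hB3 : 3 * B.card ≤ ∑ v ∈ B, degN R v := by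
    calc 3 * B.card = ∑ _v ∈ B, 3 := by rw [Finset.sum_const, smul_eq_mul, mul_comm]
      _ ≤ ∑ v ∈ B, degN R v := Finset.sum_le_sum (fun v hv => (Finset.mem_filter.mp hv).2)
  set S2 : Finset V := Finset.univ.filter
    (fun v => degN R v = 2 ∧ ∃ u : V, R.Adj v u ∧ (degN R u = 1 ∨ 3 ≤ degN R u)) with hS2def
  have hS2card : S2.card ≤ L.card + ∑ v ∈ B, degN R v := by
    have hsub : S2 ⊆ (L ∪ B).biUnion (fun u => (R.neighborSet u).toFinset) := by
      intro v hv
      simp only [hS2def, Finset.mem_filter, Finset.mem_univ, true_and] at hv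
      obtain ⟨_, u, hadj, hu⟩ := hv
      refine Finset.mem_biUnion.mpr ⟨u, ?_, Set.mem_toFinset.mpr hadj.symm⟩
      rcases hu with h | h
      · exact Finset.mem_union_left _ ((hmemL u).mpr h)
      · exact Finset.mem_union_right _ ((hmemB u).mpr h)
    have hdisjLB : Disjoint L B := by
      rw [Finset.disjoint_left]
      intro a haL haB
      have h1 := (hmemL a).mp haL
      have h3 := (hmemB a).mp haB
      omega
    calc S2.card ≤ ((L ∪ B).biUnion (fun u => (R.neighborSet u).toFinset)).card :=
          Finset.card_le_card hsub
      _ ≤ ∑ u ∈ L ∪ B, (R.neighborSet u).toFinset.card := Finset.card_biUnion_le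
      _ = ∑ u ∈ L ∪ B, degN R u := Finset.sum_congr rfl (fun u _ => (hdeq u).symm)
      _ = ∑ u ∈ L, degN R u + ∑ u ∈ B, degN R u := Finset.sum_union hdisjLB
      _ = L.card + ∑ v ∈ B, degN R v := by
          rw [Finset.card_eq_sum_ones L]
          exact congrArg₂ (· + ·)
            (Finset.sum_congr rfl (fun v hv => (hmemL v).mp hv)) rfl
  set A1 : Finset V := Finset.univ.filter (fun v => degN R v = 1) with hA1
  set A3 : Finset V := Finset.univ.filter (fun v => 3 ≤ degN R v) with hA3
  have hSeq : Finset.univ.filter (fun v : V => InVStar R v) = A1 ∪ S2 ∪ A3 := by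
    ext v
    rw [Finset.mem_filter]
    simp only [hA1, hA3, hS2def, Finset.mem_filter, Finset.mem_union, Finset.mem_univ,
      true_and, InVStar]
    constructor
    · rintro (h | h | h)
      · exact Or.inl (Or.inl h)
      · exact Or.inr h
      · exact Or.inl (Or.inr h)
    · rintro ((h | h) | h)
      · exact Or.inl h
      · exact Or.inr (Or.inr h)
      · exact Or.inr (Or.inl h)
  have hd12 : Disjoint A1 S2 := by
    rw [Finset.disjoint_left]
    intro a h1 h2
    simp only [hA1, hS2def, Finset.mem_filter, Finset.mem_univ, true_and] at h1 h2
    omega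
  have hd123 : Disjoint (A1 ∪ S2) A3 := by
    rw [Finset.disjoint_left]
    intro a h1 h3
    simp only [hA1, hA3, hS2def, Finset.mem_filter, Finset.mem_univ, true_and,
      Finset.mem_union] at h1 h3
    rcases h1 with h | h <;> omega
  have hA1L : A1.card = L.card := by
    congr 1
    ext v
    rw [hmemL]
    simp [hA1]
  have hA3B : A3 = B := by
    ext v
    rw [hmemB]
    simp [hA3]
  have hb1 : ∑ v ∈ A1, (pairing v).card ≤ A1.card := by
    rw [Finset.card_eq_sum_ones]
    refine Finset.sum_le_sum (fun v hv => ?_)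
    have h1 : degN R v = 1 := by simpa [hA1] using hv
    exact le_trans (pairing_card_le_choose (pairing v)) (le_of_eq (by rw [h1]; decide))
  have hb2 : ∑ v ∈ S2, (pairing v).card ≤ 3 * S2.card := by
    calc ∑ v ∈ S2, (pairing v).card ≤ ∑ _v ∈ S2, 3 := by
          refine Finset.sum_le_sum (fun v hv => ?_)
          have h2 : degN R v = 2 := by
            simp only [hS2def, Finset.mem_filter, Finset.mem_univ, true_and] at hv
            exact hv.1
          exact le_trans (pairing_card_le_choose (pairing v)) (le_of_eq (by rw [h2]; decide))
      _ = 3 * S2.card := by rw [Finset.sum_const, smul_eq_mul, mul_comm]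
  have hb3 : ∑ v ∈ A3, (pairing v).card ≤ 2 * ∑ v ∈ B, degN R v := by
    calc ∑ v ∈ A3, (pairing v).card ≤ ∑ v ∈ A3, 2 * degN R v := by
          refine Finset.sum_le_sum (fun v hv => ?_)
          have h3 : 3 ≤ degN R v := by simpa [hA3] using hv
          exact noncross_card_le (pairing v) (hbranch v h3)
            (hnc v (Or.inr (Or.inl h3)))
      _ = 2 * ∑ v ∈ B, degN R v := by rw [hA3B, Finset.mul_sum]
  rw [hSeq, Finset.sum_union hd123, Finset.sum_union hd12]
  omega
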